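/- Triangle inequality for Lasso-regularized fsFGW with q = 1: assume every entry of the probability vector b is strictly positive. Let fsFGW_L(X,Y), fsFGW_L(Y,Z), fsFGW_L(X,Z) denote the optimal values of the Lasso-regularized fsFGW problems between the corresponding pairs of structured objects, all with exponent q = 1 and the same α ∈ [0,1] and λ > 0. Then fsFGW_L(X,Z) ≤ fsFGW_L(X,Y) + fsFGW_L(Y,Z). -/
import Mathlib


lemma sum3 {ι κ μ : Type*} [Fintype ι] [Fintype κ] [Fintype μ]
    (f : ι → κ → ℝ) (g : κ → μ → ℝ) :
    (∑ i, ∑ k, ∑ j, f i j * g j k) = ∑ j, (∑ i, f i j) * (∑ k, g j k) := by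
  have h1 : ∀ i, (∑ k, ∑ j, f i j * g j k) = ∑ j, f i j * ∑ k, g j k := by
    intro i
    rw [Finset.sum_comm]
    exact Finset.sum_congr rfl fun j _ => (Finset.mul_sum _ _ _).symm
  simp_rw [h1]
  rw [Finset.sum_comm]
  exact Finset.sum_congr rfl fun j _ => (Finset.sum_mul _ _ _).symm

lemma glue_bound {ι κ μ : Type*} [Fintype ι] [Fintype κ] [Fintype μ]
    (bb : κ → ℝ) (hb : ∀ j, 0 < bb j)
    (A : ι → κ → ℝ) (B : κ → μ → ℝ) (C : ι → μ → ℝ)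
    (hC : ∀ i j k, C i k ≤ A i j + B j k)
    (T1 : ι → κ → ℝ) (T2 : κ → μ → ℝ)
    (hT1 : ∀ i j, 0 ≤ T1 i j) (hT2 : ∀ j k, 0 ≤ T2 j k)
    (hc1 : ∀ j, ∑ i, T1 i j = bb j) (hr2 : ∀ j, ∑ k, T2 j k = bb j) :
    (∑ i, ∑ k, (∑ j, T1 i j * T2 j k / bb j) * C i k)
      ≤ (∑ i, ∑ j, T1 i j * A i j) + (∑ j, ∑ k, T2 j k * B j k) := by
  have step : ∀ i k, (∑ j, T1 i j * T2 j k / bb j) * C i k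
      ≤ ∑ j, T1 i j * T2 j k / bb j * (A i j + B j k) := by
    intro i k
    rw [Finset.sum_mul]
    refine Finset.sum_le_sum fun j _ => ?_
    have h0 : 0 ≤ T1 i j * T2 j k / bb j := by
      have := hT1 i j; have := hT2 j k; have := (hb j).le; positivity
    exact mul_le_mul_of_nonneg_left (hC i j k) h0
  calc (∑ i, ∑ k, (∑ j, T1 i j * T2 j k / bb j) * C i k)
      ≤ ∑ i, ∑ k, ∑ j, T1 i j * T2 j k / bb j * (A i j + B j k) :=
        Finset.sum_le_sum fun i _ => Finset.sum_le_sum fun k _ => step i k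
    _ = (∑ i, ∑ j, T1 i j * A i j) + (∑ j, ∑ k, T2 j k * B j k) := by
        have expand : ∀ (i : ι) (k : μ) (j : κ), T1 i j * T2 j k / bb j * (A i j + B j k)
            = (T1 i j * A i j) * (T2 j k / bb j) + (T1 i j / bb j) * (T2 j k * B j k) := by
          intros; ring
        simp_rw [expand, Finset.sum_add_distrib]
        rw [sum3, sum3]
        congr 1
        · rw [Finset.sum_comm]
          refine Finset.sum_congr rfl fun j _ => ?_
          rw [← Finset.sum_div, hr2, div_self (hb j).ne', mul_one]
        · refine Finset.sum_congr rfl fun j _ => ?_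
          rw [← Finset.sum_div, hc1, div_self (hb j).ne', one_mul]


/-- A probability vector: nonnegative entries summing to 1. -/
def IsProb {n : ℕ} (a : Fin n → ℝ) : Prop := (∀ i, 0 ≤ a i) ∧ ∑ i, a i = 1

/-- Membership in the transport polytope U(a,b). -/
def InU {n m : ℕ} (a : Fin n → ℝ) (b : Fin m → ℝ) (T : Matrix (Fin n) (Fin m) ℝ) : Prop :=
  (∀ i j, 0 ≤ T i j) ∧ (∀ i, ∑ j, T i j = a i) ∧ (∀ j, ∑ i, T i j = b j)

/-- Feature score `s_r(T) = Σ_{i,j} T_{ij} |X_{ir} − Y_{jr}|^q`. -/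
noncomputable def score {n m d : ℕ} (q : ℝ) (X : Matrix (Fin n) (Fin d) ℝ)
    (Y : Matrix (Fin m) (Fin d) ℝ) (T : Matrix (Fin n) (Fin m) ℝ) (r : Fin d) : ℝ :=
  ∑ i, ∑ j, T i j * |X i r - Y j r| ^ q

/-- Gromov–Wasserstein term `GW(T) = Σ |C^X_{ii'} − C^Y_{jj'}|^q T_{ij} T_{i'j'}`. -/
noncomputable def gwTerm {n m : ℕ} (q : ℝ) (CX : Matrix (Fin n) (Fin n) ℝ)
    (CY : Matrix (Fin m) (Fin m) ℝ) (T : Matrix (Fin n) (Fin m) ℝ) : ℝ :=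
  ∑ i, ∑ i', ∑ j, ∑ j', |CX i i' - CY j j'| ^ q * T i j * T i' j'

/-- Lasso-regularized fsFGW objective. -/
noncomputable def FL {n m d : ℕ} (q α lam : ℝ)
    (CX : Matrix (Fin n) (Fin n) ℝ) (CY : Matrix (Fin m) (Fin m) ℝ)
    (X : Matrix (Fin n) (Fin d) ℝ) (Y : Matrix (Fin m) (Fin d) ℝ)
    (T : Matrix (Fin n) (Fin m) ℝ) (w : Fin d → ℝ) : ℝ :=
  (1 - α) * ∑ r, (1 - w r) * score q X Y T r + α * gwTerm q CX CY T + lam * ∑ r, w r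

/-- Optimal value of the Lasso-regularized fsFGW problem between two
structured objects. -/
noncomputable def fsLVal {n m d : ℕ} (q α lam : ℝ)
    (CX : Matrix (Fin n) (Fin n) ℝ) (CY : Matrix (Fin m) (Fin m) ℝ)
    (X : Matrix (Fin n) (Fin d) ℝ) (Y : Matrix (Fin m) (Fin d) ℝ)
    (a : Fin n → ℝ) (b : Fin m → ℝ) : ℝ :=
  sInf {v : ℝ | ∃ T w, InU a b T ∧ (∀ r, w r ∈ Set.Icc (0:ℝ) 1) ∧
    v = FL q α lam CX CY X Y T w}

lemma score_glue {n m p d : ℕ} (b : Fin m → ℝ) (hb : ∀ j, 0 < b j)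
    (X : Matrix (Fin n) (Fin d) ℝ) (Y : Matrix (Fin m) (Fin d) ℝ) (Z : Matrix (Fin p) (Fin d) ℝ)
    (T1 : Matrix (Fin n) (Fin m) ℝ) (T2 : Matrix (Fin m) (Fin p) ℝ)
    (hT1 : ∀ i j, 0 ≤ T1 i j) (hT2 : ∀ j k, 0 ≤ T2 j k)
    (hc1 : ∀ j, ∑ i, T1 i j = b j) (hr2 : ∀ j, ∑ k, T2 j k = b j) (r : Fin d) :
    score 1 X Z (Matrix.of fun i k => ∑ j, T1 i j * T2 j k / b j) r
      ≤ score 1 X Y T1 r + score 1 Y Z T2 r := by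
  simp only [score, Real.rpow_one, Matrix.of_apply]
  exact glue_bound b hb (fun i j => |X i r - Y j r|) (fun j k => |Y j r - Z k r|)
    (fun i k => |X i r - Z k r|) (fun i j k => abs_sub_le _ _ _) T1 T2 hT1 hT2 hc1 hr2

lemma gw_glue {n m p : ℕ} (b : Fin m → ℝ) (hb : ∀ j, 0 < b j)
    (CX : Matrix (Fin n) (Fin n) ℝ) (CY : Matrix (Fin m) (Fin m) ℝ)
    (CZ : Matrix (Fin p) (Fin p) ℝ)
    (T1 : Matrix (Fin n) (Fin m) ℝ) (T2 : Matrix (Fin m) (Fin p) ℝ)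
    (hT1 : ∀ i j, 0 ≤ T1 i j) (hT2 : ∀ j k, 0 ≤ T2 j k)
    (hc1 : ∀ j, ∑ i, T1 i j = b j) (hr2 : ∀ j, ∑ k, T2 j k = b j) :
    gwTerm 1 CX CZ (Matrix.of fun i k => ∑ j, T1 i j * T2 j k / b j)
      ≤ gwTerm 1 CX CY T1 + gwTerm 1 CY CZ T2 := by
  simp only [gwTerm, Real.rpow_one, Matrix.of_apply]
  have key := glue_bound (ι := Fin n × Fin n) (κ := Fin m × Fin m) (μ := Fin p × Fin p)
    (fun J => b J.1 * b J.2) (fun J => mul_pos (hb J.1) (hb J.2))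
    (fun I J => |CX I.1 I.2 - CY J.1 J.2|) (fun J K => |CY J.1 J.2 - CZ K.1 K.2|)
    (fun I K => |CX I.1 I.2 - CZ K.1 K.2|) (fun I J K => abs_sub_le _ _ _)
    (fun I J => T1 I.1 J.1 * T1 I.2 J.2) (fun J K => T2 J.1 K.1 * T2 J.2 K.2)
    (fun I J => mul_nonneg (hT1 _ _) (hT1 _ _))
    (fun J K => mul_nonneg (hT2 _ _) (hT2 _ _))
    (fun J => by
      rw [Fintype.sum_prod_type]
      simp_rw [← Finset.mul_sum, hc1, ← Finset.sum_mul, hc1])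
    (fun J => by
      rw [Fintype.sum_prod_type]
      simp_rw [← Finset.mul_sum, hr2, ← Finset.sum_mul, hr2])
  simp only [Fintype.sum_prod_type] at key
  have tg_prod : ∀ (i i' : Fin n) (k k' : Fin p),
      (∑ j, T1 i j * T2 j k / b j) * (∑ j', T1 i' j' * T2 j' k' / b j')
        = ∑ j, ∑ j', T1 i j * T1 i' j' * (T2 j k * T2 j' k') / (b j * b j') := by
    intro i i' k k'
    rw [Finset.sum_mul_sum]
    exact Finset.sum_congr rfl fun j _ => Finset.sum_congr rfl fun j' _ => by ring
  refine le_trans (le_of_eq ?_) (le_trans key (le_of_eq ?_))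
  · refine Finset.sum_congr rfl fun i _ => Finset.sum_congr rfl fun i' _ =>
      Finset.sum_congr rfl fun k _ => Finset.sum_congr rfl fun k' _ => ?_
    rw [show |CX i i' - CZ k k'| * (∑ j, T1 i j * T2 j k / b j) * (∑ j, T1 i' j * T2 j k' / b j)
        = ((∑ j, T1 i j * T2 j k / b j) * (∑ j', T1 i' j' * T2 j' k' / b j'))
          * |CX i i' - CZ k k'| from by ring, tg_prod]
  · congr 1
    · exact Finset.sum_congr rfl fun i _ => Finset.sum_congr rfl fun i' _ =>
        Finset.sum_congr rfl fun j _ => Finset.sum_congr rfl fun j' _ => by ring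
    · exact Finset.sum_congr rfl fun j _ => Finset.sum_congr rfl fun j' _ =>
        Finset.sum_congr rfl fun k _ => Finset.sum_congr rfl fun k' _ => by ring

lemma InU_glue {n m p : ℕ} {a : Fin n → ℝ} {b : Fin m → ℝ} {c : Fin p → ℝ}
    (hb : ∀ j, 0 < b j)
    {T1 : Matrix (Fin n) (Fin m) ℝ} {T2 : Matrix (Fin m) (Fin p) ℝ}
    (h1 : InU a b T1) (h2 : InU b c T2) :
    InU a c (Matrix.of fun i k => ∑ j, T1 i j * T2 j k / b j) := by
  obtain ⟨h1n, h1r, h1c⟩ := h1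
  obtain ⟨h2n, h2r, h2c⟩ := h2
  refine ⟨fun i k => ?_, fun i => ?_, fun k => ?_⟩
  · show 0 ≤ ∑ j, T1 i j * T2 j k / b j
    exact Finset.sum_nonneg fun j _ => by
      have := h1n i j; have := h2n j k; have := (hb j).le; positivity
  · show (∑ k, ∑ j, T1 i j * T2 j k / b j) = a i
    rw [Finset.sum_comm]
    have : ∀ j, ∑ k, T1 i j * T2 j k / b j = T1 i j := by
      intro j
      rw [← Finset.sum_div, ← Finset.mul_sum, h2r j, mul_div_assoc,
        div_self (hb j).ne', mul_one]
    simp_rw [this]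
    exact h1r i
  · show (∑ i, ∑ j, T1 i j * T2 j k / b j) = c k
    rw [Finset.sum_comm]
    have : ∀ j, ∑ i, T1 i j * T2 j k / b j = T2 j k := by
      intro j
      rw [← Finset.sum_div, ← Finset.sum_mul, h1c j, mul_comm, mul_div_assoc,
        div_self (hb j).ne', mul_one]
    simp_rw [this]
    exact h2c k

lemma score_nonneg {n m d : ℕ} {X : Matrix (Fin n) (Fin d) ℝ} {Y : Matrix (Fin m) (Fin d) ℝ}
    {T : Matrix (Fin n) (Fin m) ℝ} (hT : ∀ i j, 0 ≤ T i j) (q : ℝ) (r : Fin d) :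
    0 ≤ score q X Y T r :=
  Finset.sum_nonneg fun i _ => Finset.sum_nonneg fun j _ =>
    mul_nonneg (hT i j) (Real.rpow_nonneg (abs_nonneg _) q)

lemma gw_nonneg {n m : ℕ} {CX : Matrix (Fin n) (Fin n) ℝ} {CY : Matrix (Fin m) (Fin m) ℝ}
    {T : Matrix (Fin n) (Fin m) ℝ} (hT : ∀ i j, 0 ≤ T i j) (q : ℝ) :
    0 ≤ gwTerm q CX CY T :=
  Finset.sum_nonneg fun i _ => Finset.sum_nonneg fun i' _ =>
    Finset.sum_nonneg fun j _ => Finset.sum_nonneg fun j' _ =>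
      mul_nonneg (mul_nonneg (Real.rpow_nonneg (abs_nonneg _) q) (hT i j)) (hT i' j')

lemma FL_nonneg {n m d : ℕ} {q α lam : ℝ} (hα : α ∈ Set.Icc (0:ℝ) 1) (hlam : 0 < lam)
    {CX : Matrix (Fin n) (Fin n) ℝ} {CY : Matrix (Fin m) (Fin m) ℝ}
    {X : Matrix (Fin n) (Fin d) ℝ} {Y : Matrix (Fin m) (Fin d) ℝ}
    {T : Matrix (Fin n) (Fin m) ℝ} {w : Fin d → ℝ}
    (hT : ∀ i j, 0 ≤ T i j) (hw : ∀ r, w r ∈ Set.Icc (0:ℝ) 1) :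
    0 ≤ FL q α lam CX CY X Y T w := by
  have h1 : 0 ≤ ∑ r, (1 - w r) * score q X Y T r :=
    Finset.sum_nonneg fun r _ => mul_nonneg (by linarith [(hw r).2]) (score_nonneg hT q r)
  have h2 : 0 ≤ gwTerm q CX CY T := gw_nonneg hT q
  have h3 : 0 ≤ ∑ r, w r := Finset.sum_nonneg fun r _ => (hw r).1
  have := hα.1; have := hα.2
  unfold FL
  have := mul_nonneg (by linarith : (0:ℝ) ≤ 1 - α) h1
  have := mul_nonneg hα.1 h2
  have := mul_nonneg hlam.le h3
  linarith

lemma sInf_tri {S1 S2 S3 : Set ℝ} (h1 : S1.Nonempty) (h2 : S2.Nonempty)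
    (hb3 : BddBelow S3)
    (h : ∀ v1 ∈ S1, ∀ v2 ∈ S2, ∃ v ∈ S3, v ≤ v1 + v2) :
    sInf S3 ≤ sInf S1 + sInf S2 := by
  have key : ∀ v1 ∈ S1, ∀ v2 ∈ S2, sInf S3 ≤ v1 + v2 := by
    intro v1 hv1 v2 hv2
    obtain ⟨v, hv, hle⟩ := h v1 hv1 v2 hv2
    exact le_trans (csInf_le hb3 hv) hle
  have hA : sInf S3 - sInf S2 ≤ sInf S1 := by
    refine le_csInf h1 fun v1 hv1 => ?_
    have : sInf S3 - v1 ≤ sInf S2 :=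
      le_csInf h2 fun v2 hv2 => by linarith [key v1 hv1 v2 hv2]
    linarith
  linarith

/-- triangle inequality for Lasso-regularized fsFGW with `q = 1`. -/
theorem lasso_fsFGW_triangle (n m p d : ℕ)
    (hn : 1 ≤ n) (hm : 1 ≤ m) (hp : 1 ≤ p) (hd : 1 ≤ d)
    (α lam : ℝ) (hα : α ∈ Set.Icc (0:ℝ) 1) (hlam : 0 < lam)
    (a : Fin n → ℝ) (b : Fin m → ℝ) (c : Fin p → ℝ)
    (ha : IsProb a) (hb : IsProb b) (hc : IsProb c) (hbpos : ∀ j, 0 < b j)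
    (CX : Matrix (Fin n) (Fin n) ℝ) (CY : Matrix (Fin m) (Fin m) ℝ)
    (CZ : Matrix (Fin p) (Fin p) ℝ)
    (X : Matrix (Fin n) (Fin d) ℝ) (Y : Matrix (Fin m) (Fin d) ℝ)
    (Z : Matrix (Fin p) (Fin d) ℝ) :
    fsLVal 1 α lam CX CZ X Z a c ≤
      fsLVal 1 α lam CX CY X Y a b + fsLVal 1 α lam CY CZ Y Z b c := by
  unfold fsLVal
  refine sInf_tri ?_ ?_ ?_ ?_
  · exact ⟨FL 1 α lam CX CY X Y (Matrix.of fun i j => a i * b j) (fun _ => 0),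
      Matrix.of fun i j => a i * b j, fun _ => 0,
      ⟨fun i j => mul_nonneg (ha.1 i) (hb.1 j),
       fun i => by show (∑ j, a i * b j) = a i; rw [← Finset.mul_sum, hb.2, mul_one],
       fun j => by show (∑ i, a i * b j) = b j; rw [← Finset.sum_mul, ha.2, one_mul]⟩,
      fun r => ⟨le_rfl, zero_le_one⟩, rfl⟩
  · exact ⟨FL 1 α lam CY CZ Y Z (Matrix.of fun i j => b i * c j) (fun _ => 0),
      Matrix.of fun i j => b i * c j, fun _ => 0,
      ⟨fun i j => mul_nonneg (hb.1 i) (hc.1 j),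
       fun i => by show (∑ j, b i * c j) = b i; rw [← Finset.mul_sum, hc.2, mul_one],
       fun j => by show (∑ i, b i * c j) = c j; rw [← Finset.sum_mul, hb.2, one_mul]⟩,
      fun r => ⟨le_rfl, zero_le_one⟩, rfl⟩
  · refine ⟨0, fun v hv => ?_⟩
    obtain ⟨T, w, hT, hw, rfl⟩ := hv
    exact FL_nonneg hα hlam hT.1 hw
  · rintro v1 ⟨T1, w1, hT1, hw1, rfl⟩ v2 ⟨T2, w2, hT2, hw2, rfl⟩
    set Tg : Matrix (Fin n) (Fin p) ℝ :=
      Matrix.of fun i k => ∑ j, T1 i j * T2 j k / b j with hTg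
    set wg : Fin d → ℝ := fun r => min (w1 r + w2 r) 1 with hwg
    refine ⟨FL 1 α lam CX CZ X Z Tg wg,
      ⟨Tg, wg, InU_glue hbpos hT1 hT2,
       fun r => ⟨le_min (by linarith [(hw1 r).1, (hw2 r).1]) zero_le_one,
         min_le_right _ _⟩, rfl⟩, ?_⟩
    have hc1 : ∀ j, ∑ i, T1 i j = b j := hT1.2.2
    have hr2 : ∀ j, ∑ k, T2 j k = b j := hT2.2.1
    have hsg : ∀ r, score 1 X Z Tg r ≤ score 1 X Y T1 r + score 1 Y Z T2 r :=
      fun r => score_glue b hbpos X Y Z T1 T2 hT1.1 hT2.1 hc1 hr2 r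
    have hgw := gw_glue b hbpos CX CY CZ T1 T2 hT1.1 hT2.1 hc1 hr2
    have hsum : ∑ r, (1 - wg r) * score 1 X Z Tg r
        ≤ (∑ r, (1 - w1 r) * score 1 X Y T1 r) + ∑ r, (1 - w2 r) * score 1 Y Z T2 r := by
      rw [← Finset.sum_add_distrib]
      refine Finset.sum_le_sum fun r _ => ?_
      have s1n := score_nonneg (X:=X) (Y:=Y) hT1.1 1 r
      have s2n := score_nonneg (X:=Y) (Y:=Z) hT2.1 1 r
      have hwg1 : w1 r ≤ wg r := le_min (by linarith [(hw2 r).1]) (hw1 r).2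
      have hwg2 : w2 r ≤ wg r := le_min (by linarith [(hw1 r).1]) (hw2 r).2
      have hwgle : wg r ≤ 1 := min_le_right _ _
      have h1 : (1 - wg r) * score 1 X Z Tg r
          ≤ (1 - wg r) * (score 1 X Y T1 r + score 1 Y Z T2 r) :=
        mul_le_mul_of_nonneg_left (hsg r) (by linarith)
      nlinarith [mul_le_mul_of_nonneg_right hwg1 s1n, mul_le_mul_of_nonneg_right hwg2 s2n]
    have hA : (1 - α) * ∑ r, (1 - wg r) * score 1 X Z Tg r
        ≤ (1 - α) * ((∑ r, (1 - w1 r) * score 1 X Y T1 r)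
            + ∑ r, (1 - w2 r) * score 1 Y Z T2 r) :=
      mul_le_mul_of_nonneg_left hsum (by linarith [hα.2])
    have hGW : α * gwTerm 1 CX CZ Tg
        ≤ α * (gwTerm 1 CX CY T1 + gwTerm 1 CY CZ T2) :=
      mul_le_mul_of_nonneg_left hgw hα.1
    have hW : ∑ r, wg r ≤ (∑ r, w1 r) + ∑ r, w2 r := by
      rw [← Finset.sum_add_distrib]
      exact Finset.sum_le_sum fun r _ => min_le_left _ _
    have hlamW : lam * ∑ r, wg r ≤ lam * ((∑ r, w1 r) + ∑ r, w2 r) :=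
      mul_le_mul_of_nonneg_left hW hlam.le
    rw [mul_add] at hA hGW hlamW
    simp only [FL]
    linarith
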